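/- Let Θ*∈S^d be positive definite, δ∈[0,2], and Θ∈S^d. Then the function H ↦ Υ(H;Θ) is convex on the open convex set H^o = {H∈S^d : −Θ*^{−1} ≺ H ≺ Θ*^{−1}}. -/

import Mathlib

open Matrix MeasureTheory Real Filter

noncomputable section

/-- Frobenius norm of a matrix. -/
def frobNorm {d : ℕ} (A : Matrix (Fin d) (Fin d) ℝ) : ℝ :=
  Real.sqrt (∑ i, ∑ j, (A i j) ^ 2)

/-- Spectral norm of a matrix. -/
def specNorm {d : ℕ} (A : Matrix (Fin d) (Fin d) ℝ) : ℝ :=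
  ‖Matrix.toEuclideanCLM (𝕜 := ℝ) A‖

open scoped Classical in
/-- The square root of a positive semidefinite real matrix (junk value `0` otherwise). -/
def msqrt {d : ℕ} (A : Matrix (Fin d) (Fin d) ℝ) : Matrix (Fin d) (Fin d) ℝ :=
  if h : A.PosSemidef then
    (h.1.eigenvectorUnitary : Matrix (Fin d) (Fin d) ℝ) *
      diagonal ((↑) ∘ (√·) ∘ h.1.eigenvalues) *
      (star (h.1.eigenvectorUnitary : Matrix (Fin d) (Fin d) ℝ))
  else 0

/-- The standard Gaussian distribution on ℝ^d. -/
def stdGaussian (d : ℕ) : Measure (Fin d → ℝ) :=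
  Measure.pi fun _ => ProbabilityTheory.gaussianReal 0 1

/-- The Gaussian distribution `N(θ,Θ)` on ℝ^d: the law of `θ + Θ^{1/2} ξ`. -/
def gaussianVec {d : ℕ} (θ : Fin d → ℝ) (Θ : Matrix (Fin d) (Fin d) ℝ) :
    Measure (Fin d → ℝ) :=
  (stdGaussian d).map (fun ξ => θ + (msqrt Θ).mulVec ξ)

/-- The (d+1)×(d+1) symmetric matrix `[[H,h];[hᵀ,0]]`. -/
def liftSym {d : ℕ} (H : Matrix (Fin d) (Fin d) ℝ) (h : Fin d → ℝ) :
    Matrix (Fin (d+1)) (Fin (d+1)) ℝ := fun i j =>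
  if hi : (i : ℕ) < d then
    if hj : (j : ℕ) < d then H ⟨i, hi⟩ ⟨j, hj⟩ else h ⟨i, hi⟩
  else if hj : (j : ℕ) < d then h ⟨j, hj⟩ else 0

/-- The d×(d+1) matrix `[H,h]`. -/
def liftRect {d : ℕ} (H : Matrix (Fin d) (Fin d) ℝ) (h : Fin d → ℝ) :
    Matrix (Fin d) (Fin (d+1)) ℝ := fun i j =>
  if hj : (j : ℕ) < d then H i ⟨j, hj⟩ else h i

/-- The vector `[θ;1] ∈ ℝ^{d+1}`. -/
def append1 {d : ℕ} (θ : Fin d → ℝ) : Fin (d+1) → ℝ := fun i =>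
  if hi : (i : ℕ) < d then θ ⟨i, hi⟩ else 1

/-- `Υ(H;Θ)`. -/
def Upsilon {d : ℕ} (Θstar : Matrix (Fin d) (Fin d) ℝ) (δ : ℝ)
    (H Θ : Matrix (Fin d) (Fin d) ℝ) : ℝ :=
  -(1/2) * Real.log ((1 - msqrt Θstar * H * msqrt Θstar).det)
  + (1/2) * ((Θ - Θstar) * H).trace
  + δ * (2 + δ) * (frobNorm (msqrt Θstar * H * msqrt Θstar)) ^ 2
      / (2 * (1 - specNorm (msqrt Θstar * H * msqrt Θstar)))

/-- `Γ(h,H;Z)`. -/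
def Gammaf {d : ℕ} (Θstar : Matrix (Fin d) (Fin d) ℝ) (h : Fin d → ℝ)
    (H : Matrix (Fin d) (Fin d) ℝ) (Z : Matrix (Fin (d+1)) (Fin (d+1)) ℝ) : ℝ :=
  (1/2) * (Z * (liftSym H h + (liftRect H h)ᵀ * (Θstar⁻¹ - H)⁻¹ * liftRect H h)).trace

/-- `Φ(h,H;Θ,Z) = Υ(H;Θ) + Γ(h,H;Z)`. -/
def PhiG {d : ℕ} (Θstar : Matrix (Fin d) (Fin d) ℝ) (δ : ℝ) (h : Fin d → ℝ)
    (H Θ : Matrix (Fin d) (Fin d) ℝ) (Z : Matrix (Fin (d+1)) (Fin (d+1)) ℝ) : ℝ :=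
  Upsilon Θstar δ H Θ + Gammaf Θstar h H Z


namespace Statement5Aux

section Frob
attribute [local instance] Matrix.frobeniusSeminormedAddCommGroup Matrix.frobeniusNormedSpace

lemma frobNorm_eq' {d : ℕ} (A : Matrix (Fin d) (Fin d) ℝ) : frobNorm A = ‖A‖ := by
  rw [frobNorm, Matrix.frobenius_norm_def, Real.sqrt_eq_rpow]
  congr 1
  refine Finset.sum_congr rfl fun i _ => Finset.sum_congr rfl fun j _ => ?_
  rw [show (2:ℝ) = ((2:ℕ):ℝ) by norm_num, Real.rpow_natCast, Real.norm_eq_abs, sq_abs]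

lemma frob_conv {d : ℕ} (A B : Matrix (Fin d) (Fin d) ℝ) {a b : ℝ} (ha : 0 ≤ a) (hb : 0 ≤ b) :
    frobNorm (a • A + b • B) ≤ a * frobNorm A + b * frobNorm B := by
  rw [frobNorm_eq', frobNorm_eq', frobNorm_eq']
  refine (norm_add_le _ _).trans ?_
  rw [norm_smul, norm_smul, Real.norm_eq_abs, Real.norm_eq_abs, abs_of_nonneg ha, abs_of_nonneg hb]

end Frob

lemma frobNorm_nonneg {d : ℕ} (A : Matrix (Fin d) (Fin d) ℝ) : 0 ≤ frobNorm A :=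
  Real.sqrt_nonneg _

lemma msqrt_isHermitian {d : ℕ} {A : Matrix (Fin d) (Fin d) ℝ} (hA : A.PosSemidef) :
    (msqrt A).IsHermitian := by
  rw [msqrt, dif_pos hA]
  simp [Matrix.IsHermitian, Matrix.star_eq_conjTranspose, Matrix.mul_assoc]

lemma msqrt_mul_self {d : ℕ} {A : Matrix (Fin d) (Fin d) ℝ} (hA : A.PosSemidef) :
    msqrt A * msqrt A = A := by
  rw [msqrt, dif_pos hA]
  have hUU : star (hA.1.eigenvectorUnitary : Matrix (Fin d) (Fin d) ℝ) * hA.1.eigenvectorUnitary = 1 :=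
    Matrix.mem_unitaryGroup_iff'.mp hA.1.eigenvectorUnitary.2
  conv_rhs => rw [hA.1.spectral_theorem, Unitary.conjStarAlgAut_apply]
  simp only [Matrix.mul_assoc]
  rw [← Matrix.mul_assoc (star _) (hA.1.eigenvectorUnitary : Matrix (Fin d) (Fin d) ℝ), hUU, Matrix.one_mul,
    ← Matrix.mul_assoc (diagonal _), diagonal_mul_diagonal]
  congr 3
  funext i
  simp [Real.mul_self_sqrt (hA.eigenvalues_nonneg i)]

set_option synthInstance.maxHeartbeats 1000000 in
set_option maxHeartbeats 1000000 in
lemma spec_conv {d : ℕ} (A B : Matrix (Fin d) (Fin d) ℝ) {a b : ℝ} (ha : 0 ≤ a) (hb : 0 ≤ b) :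
    specNorm (a • A + b • B) ≤ a * specNorm A + b * specNorm B := by
  rw [specNorm, specNorm, specNorm, map_add, _root_.map_smul, _root_.map_smul]
  refine (norm_add_le _ _).trans ?_
  have h1 : ‖a • toEuclideanCLM (𝕜 := ℝ) A‖ = a * ‖toEuclideanCLM (𝕜 := ℝ) A‖ := by
    have := norm_smul a (toEuclideanCLM (𝕜 := ℝ) A)
    rw [this, Real.norm_eq_abs, abs_of_nonneg ha]
  have h2 : ‖b • toEuclideanCLM (𝕜 := ℝ) B‖ = b * ‖toEuclideanCLM (𝕜 := ℝ) B‖ := by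
    have := norm_smul b (toEuclideanCLM (𝕜 := ℝ) B)
    rw [this, Real.norm_eq_abs, abs_of_nonneg hb]
  rw [h1, h2]

lemma abs_eig_lt_one {d : ℕ} {M : Matrix (Fin d) (Fin d) ℝ} (hM : M.IsHermitian)
    (h1 : (1 - M).PosDef) (h2 : (1 + M).PosDef) (i : Fin d) : |hM.eigenvalues i| < 1 := by
  set v : Fin d → ℝ := ⇑(hM.eigenvectorBasis i) with hv
  have hv0 : v ≠ 0 := by
    have := hM.eigenvectorBasis.orthonormal.ne_zero i
    intro h; apply this; ext j; exact congrFun h j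
  have hvv : 0 < v ⬝ᵥ v := by
    rcases Function.ne_iff.1 hv0 with ⟨j, hj⟩
    have hj' : (0:ℝ) < v j * v j := by
      rcases (mul_self_nonneg (v j)).lt_or_eq with h | h
      · exact h
      · exact absurd (by nlinarith [sq_nonneg (v j)] : v j = 0) (by simpa using hj)
    have : 0 < ∑ k, v k * v k :=
      Finset.sum_pos' (fun k _ => mul_self_nonneg _) ⟨j, Finset.mem_univ j, hj'⟩
    simpa [dotProduct] using this
  set μ := hM.eigenvalues i with hμ
  have hb1 : μ < 1 := by
    have hpos := h1.dotProduct_mulVec_pos hv0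
    have hmv : (1 - M) *ᵥ v = (1 - μ) • v := by
      rw [sub_mulVec, one_mulVec, hM.mulVec_eigenvectorBasis, sub_smul, one_smul]
    rw [hmv, star_trivial, dotProduct_smul, smul_eq_mul] at hpos
    nlinarith
  have hb2 : -1 < μ := by
    have hpos := h2.dotProduct_mulVec_pos hv0
    have hmv : (1 + M) *ᵥ v = (1 + μ) • v := by
      rw [add_mulVec, one_mulVec, hM.mulVec_eigenvectorBasis, add_smul, one_smul]
    rw [hmv, star_trivial, dotProduct_smul, smul_eq_mul] at hpos
    nlinarith
  exact abs_lt.mpr ⟨hb2, hb1⟩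

lemma sq_psd {d : ℕ} {M : Matrix (Fin d) (Fin d) ℝ} (hM : M.IsHermitian) {r : ℝ}
    (hr : ∀ i, |hM.eigenvalues i| ≤ r) :
    (r ^ 2 • (1 : Matrix (Fin d) (Fin d) ℝ) - M * M).PosSemidef := by
  set V : Matrix (Fin d) (Fin d) ℝ := (hM.eigenvectorUnitary : Matrix (Fin d) (Fin d) ℝ) with hV
  have hspec := hM.spectral_theorem
  have hVV : V * star V = 1 := Matrix.mem_unitaryGroup_iff.mp hM.eigenvectorUnitary.2
  have hVV' : star V * V = 1 := Matrix.mem_unitaryGroup_iff'.mp hM.eigenvectorUnitary.2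
  set D : Matrix (Fin d) (Fin d) ℝ := diagonal (RCLike.ofReal ∘ hM.eigenvalues) with hD
  have hMM : M * M = V * (D * D) * star V := by
    rw [hspec, Unitary.conjStarAlgAut_apply, ← hV]; simp only [Matrix.mul_assoc]
    rw [← Matrix.mul_assoc (star V) V, hVV']
    simp [Matrix.mul_assoc]
  have h1 : r ^ 2 • (1 : Matrix (Fin d) (Fin d) ℝ) = V * (r ^ 2 • 1) * star V := by
    rw [Matrix.mul_smul, Matrix.smul_mul, Matrix.mul_one, hVV]
  have key : r ^ 2 • (1 : Matrix (Fin d) (Fin d) ℝ) - M * M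
      = V * (r ^ 2 • 1 - D * D) * star V := by
    rw [hMM, Matrix.mul_sub, Matrix.sub_mul, ← h1]
  rw [key]
  have hdiag : (r ^ 2 • (1 : Matrix (Fin d) (Fin d) ℝ) - D * D)
      = diagonal (fun i => r ^ 2 - (hM.eigenvalues i) ^ 2) := by
    ext i j
    rcases eq_or_ne i j with rfl | hij
    · simp [hD, diagonal_mul_diagonal, Matrix.diagonal_apply, Matrix.one_apply, sq]
    · simp [hD, diagonal_mul_diagonal, Matrix.diagonal_apply, Matrix.one_apply, hij, sq]
  rw [hdiag]
  exact (Matrix.posSemidef_diagonal_iff.mpr fun i => by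
    have := hr i
    nlinarith [sq_abs (hM.eigenvalues i), abs_nonneg (hM.eigenvalues i)]).mul_mul_conjTranspose_same V

lemma norm_le_of_psd {d : ℕ} {M : Matrix (Fin d) (Fin d) ℝ} (hMsymm : Mᵀ = M) {r : ℝ} (hr : 0 ≤ r)
    (hpsd : (r ^ 2 • (1 : Matrix (Fin d) (Fin d) ℝ) - M * M).PosSemidef) :
    ‖toEuclideanCLM (𝕜 := ℝ) M‖ ≤ r := by
  refine ContinuousLinearMap.opNorm_le_bound _ hr fun x => ?_
  set v : Fin d → ℝ := WithLp.equiv 2 _ x with hv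
  have hMx : WithLp.equiv 2 _ (toEuclideanCLM (𝕜 := ℝ) M x) = M *ᵥ v := by
    exact ofLp_toEuclideanCLM M x
  have hquad := hpsd.dotProduct_mulVec_nonneg v
  have hdot : (M *ᵥ v) ⬝ᵥ (M *ᵥ v) ≤ r ^ 2 * (v ⬝ᵥ v) := by
    have hexp : star v ⬝ᵥ ((r ^ 2 • (1 : Matrix (Fin d) (Fin d) ℝ) - M * M) *ᵥ v)
        = r ^ 2 * (v ⬝ᵥ v) - (M *ᵥ v) ⬝ᵥ (M *ᵥ v) := by
      rw [sub_mulVec, dotProduct_sub, smul_mulVec, one_mulVec]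
      have h2 : v ⬝ᵥ ((M * M) *ᵥ v) = (M *ᵥ v) ⬝ᵥ (M *ᵥ v) := by
        rw [← mulVec_mulVec, dotProduct_mulVec]
        congr 1
        rw [← hMsymm, vecMul_transpose, hMsymm]
      rw [star_trivial, dotProduct_smul, ← h2]
      simp [smul_eq_mul]
    rw [hexp] at hquad; linarith
  have hn1 : ‖toEuclideanCLM (𝕜 := ℝ) M x‖ ^ 2 = (M *ᵥ v) ⬝ᵥ (M *ᵥ v) := by
    rw [EuclideanSpace.norm_eq]
    rw [Real.sq_sqrt (by positivity)]
    rw [dotProduct]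
    refine Finset.sum_congr rfl fun i _ => ?_
    rw [Real.norm_eq_abs, sq_abs, sq]
    have := congrFun hMx i
    rw [show ((WithLp.equiv 2 ((i : Fin d) → ℝ)) ((toEuclideanCLM (𝕜 := ℝ) M) x)) i
        = (toEuclideanCLM (𝕜 := ℝ) M) x i from rfl] at this
    rw [this]
  have hn2 : ‖x‖ ^ 2 = v ⬝ᵥ v := by
    rw [EuclideanSpace.norm_eq, Real.sq_sqrt (by positivity), dotProduct]
    exact Finset.sum_congr rfl fun i _ => by rw [Real.norm_eq_abs, sq_abs, sq]; rfl
  have hsq : ‖toEuclideanCLM (𝕜 := ℝ) M x‖ ^ 2 ≤ (r * ‖x‖) ^ 2 := by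
    rw [hn1, mul_pow, hn2]; exact hdot
  have h0 : 0 ≤ r * ‖x‖ := by positivity
  nlinarith [norm_nonneg (toEuclideanCLM (𝕜 := ℝ) M x)]

lemma specNorm_lt_one {d : ℕ} {M : Matrix (Fin d) (Fin d) ℝ} (hM : M.IsHermitian)
    (h1 : (1 - M).PosDef) (h2 : (1 + M).PosDef) : specNorm M < 1 := by
  rw [specNorm]
  rcases Nat.eq_zero_or_pos d with hd | hd
  · subst hd
    have : M = 0 := by ext i; exact absurd i.2 (by omega)
    rw [this, map_zero, norm_zero]; norm_num
  · haveI : Nonempty (Fin d) := ⟨⟨0, hd⟩⟩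
    set r : ℝ := Finset.univ.sup' (Finset.univ_nonempty) (fun i => |hM.eigenvalues i|) with hr
    have hrlt : r < 1 := by
      rw [hr, Finset.sup'_lt_iff]
      exact fun i _ => abs_eig_lt_one hM h1 h2 i
    have hr0 : 0 ≤ r := le_trans (abs_nonneg _)
      (Finset.le_sup' (fun i => |hM.eigenvalues i|) (Finset.mem_univ (⟨0, hd⟩ : Fin d)))
    have hle : ∀ i, |hM.eigenvalues i| ≤ r := fun i =>
      Finset.le_sup' (fun i => |hM.eigenvalues i|) (Finset.mem_univ i)
    have hMsymm : Mᵀ = M := by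
      have := hM; rwa [Matrix.IsHermitian, conjTranspose_eq_transpose_of_trivial] at this
    exact lt_of_le_of_lt (norm_le_of_psd hMsymm hr0 (sq_psd hM hle)) hrlt

lemma posDef_conj {d : ℕ} {A S : Matrix (Fin d) (Fin d) ℝ} (hA : A.PosDef)
    (hS : S.IsHermitian) (hdet : IsUnit S.det) : (S * A * S).PosDef := by
  have hSsymm : Sᵀ = S := by
    have := hS; rwa [Matrix.IsHermitian, conjTranspose_eq_transpose_of_trivial] at this
  refine Matrix.PosDef.of_dotProduct_mulVec_pos ?_ ?_
  · rw [Matrix.IsHermitian, conjTranspose_mul, conjTranspose_mul, hS, hA.1, Matrix.mul_assoc]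
  · intro x hx
    haveI := hdet.invertible
    have hSx : S *ᵥ x ≠ 0 := by
      intro h
      apply hx
      have h2 := congrArg (fun y => S⁻¹ *ᵥ y) h
      simp only [mulVec_mulVec, Matrix.nonsing_inv_mul S hdet, one_mulVec, mulVec_zero] at h2
      exact h2
    have := hA.dotProduct_mulVec_pos hSx
    have hrw : star x ⬝ᵥ ((S * A * S) *ᵥ x) = star (S *ᵥ x) ⬝ᵥ (A *ᵥ (S *ᵥ x)) := by
      rw [star_trivial, star_trivial, ← mulVec_mulVec, ← mulVec_mulVec, dotProduct_mulVec x S,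
        ← hSsymm, vecMul_transpose, hSsymm]
    rw [hrw]
    exact this

lemma posDef_smul {d : ℕ} {A : Matrix (Fin d) (Fin d) ℝ} (hA : A.PosDef) {c : ℝ} (hc : 0 < c) :
    (c • A).PosDef := by
  refine Matrix.PosDef.of_dotProduct_mulVec_pos ?_ ?_
  · rw [Matrix.IsHermitian, conjTranspose_smul, hA.1]; simp
  · intro x hx
    have := hA.dotProduct_mulVec_pos hx
    have hrw : star x ⬝ᵥ ((c • A) *ᵥ x) = c * (star x ⬝ᵥ (A *ᵥ x)) := by
      rw [smul_mulVec, dotProduct_smul, smul_eq_mul]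
    rw [hrw]
    positivity

lemma convex_combo_posDef {d : ℕ} {A B : Matrix (Fin d) (Fin d) ℝ} (hA : A.PosDef) (hB : B.PosDef)
    {a b : ℝ} (ha : 0 ≤ a) (hb : 0 ≤ b) (hab : a + b = 1) : (a • A + b • B).PosDef := by
  rcases ha.lt_or_eq with ha' | ha'
  · rcases hb.lt_or_eq with hb' | hb'
    · exact (posDef_smul hA ha').add (posDef_smul hB hb')
    · have h1 : a = 1 := by linarith
      simp only [← hb', h1, one_smul, zero_smul, add_zero]
      exact hA
  · have h1 : b = 1 := by linarith
    simp only [← ha', h1, one_smul, zero_smul, zero_add]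
    exact hB

lemma trace_eq_sum_eig {d : ℕ} {M : Matrix (Fin d) (Fin d) ℝ} (hM : M.IsHermitian) :
    M.trace = ∑ i, hM.eigenvalues i := by
  conv_lhs => rw [hM.spectral_theorem, Unitary.conjStarAlgAut_apply]
  rw [Matrix.trace_mul_cycle]
  rw [Matrix.mem_unitaryGroup_iff'.mp hM.eigenvectorUnitary.2, Matrix.one_mul]
  simp [Matrix.trace_diagonal]

lemma log_det_le {d : ℕ} {M : Matrix (Fin d) (Fin d) ℝ} (hM : M.PosDef) :
    Real.log M.det ≤ M.trace - d := by
  have hdet : M.det = ∏ i, hM.1.eigenvalues i := by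
    rw [hM.1.det_eq_prod_eigenvalues]; norm_num
  rw [hdet, trace_eq_sum_eig hM.1]
  have hpos : ∀ i, 0 < hM.1.eigenvalues i := hM.eigenvalues_pos
  have hlogprod : Real.log (∏ i, (hM.1.eigenvalues i : ℝ))
      = ∑ i, Real.log (hM.1.eigenvalues i) := by
    rw [Real.log_prod]
    exact fun i _ => (hpos i).ne'
  rw [hlogprod]
  calc ∑ i, Real.log (hM.1.eigenvalues i) ≤ ∑ i, (hM.1.eigenvalues i - 1) :=
        Finset.sum_le_sum fun i _ => Real.log_le_sub_one_of_pos (hpos i)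
    _ = (∑ i, hM.1.eigenvalues i) - d := by
        rw [Finset.sum_sub_distrib]
        simp

lemma logdet_tangent {d : ℕ} {P C : Matrix (Fin d) (Fin d) ℝ} (hP : P.PosDef) (hC : C.PosDef) :
    Real.log P.det ≤ Real.log C.det + (C⁻¹ * (P - C)).trace := by
  have hCinv : (C⁻¹).PosDef := hC.inv
  set R := msqrt C⁻¹ with hR
  have hRR : R * R = C⁻¹ := msqrt_mul_self hCinv.posSemidef
  have hRH : R.IsHermitian := msqrt_isHermitian hCinv.posSemidef
  have hCdet : IsUnit C.det := isUnit_iff_ne_zero.mpr hC.det_pos.ne'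
  have hRdet : IsUnit R.det := by
    have hrr : R.det * R.det = (C⁻¹).det := by rw [← det_mul, hRR]
    have hCinvdet : (0:ℝ) < (C⁻¹).det := hCinv.det_pos
    refine isUnit_iff_ne_zero.mpr fun h => ?_
    rw [h, mul_zero] at hrr
    exact hCinvdet.ne (by rw [← hrr])
  have hM : (R * P * R).PosDef := posDef_conj hP hRH hRdet
  have hdetM : (R * P * R).det = (C⁻¹).det * P.det := by
    rw [det_mul, det_mul, mul_comm R.det P.det, mul_assoc, ← det_mul, hRR, mul_comm]
  have htrM : (R * P * R).trace = (C⁻¹ * P).trace := by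
    rw [trace_mul_cycle, hRR]
  have hlog : Real.log (R * P * R).det = Real.log P.det - Real.log C.det := by
    rw [hdetM, Real.log_mul hCinv.det_pos.ne' hP.det_pos.ne']
    rw [C.det_nonsing_inv, Ring.inverse_eq_inv', Real.log_inv]
    ring
  have hkey := log_det_le hM
  rw [hlog, htrM] at hkey
  have htr : (C⁻¹ * (P - C)).trace = (C⁻¹ * P).trace - d := by
    rw [Matrix.mul_sub, trace_sub, Matrix.nonsing_inv_mul C hCdet, trace_one]
    simp
  rw [htr]
  linarith

lemma sub_combo {M : Type*} [AddCommGroup M] [Module ℝ M] (u x y : M) {a b : ℝ}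
    (hab : a + b = 1) : u - (a • x + b • y) = a • (u - x) + b • (u - y) := by
  have h1 : a • u + b • u = u := by rw [← add_smul, hab, one_smul]
  rw [smul_sub, smul_sub]
  conv_lhs => rw [← h1]
  abel

lemma add_combo {M : Type*} [AddCommGroup M] [Module ℝ M] (u x y : M) {a b : ℝ}
    (hab : a + b = 1) : (a • x + b • y) + u = a • (x + u) + b • (y + u) := by
  have h1 : a • u + b • u = u := by rw [← add_smul, hab, one_smul]
  rw [smul_add, smul_add]
  conv_lhs => rw [← h1]
  abel

lemma combo_zero {M : Type*} [AddCommGroup M] [Module ℝ M] {P Q C : M} {a b : ℝ}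
    (hab : a + b = 1) (hC : C = a • P + b • Q) : a • (P - C) + b • (Q - C) = 0 := by
  have h1 : a • C + b • C = C := by rw [← add_smul, hab, one_smul]
  calc a • (P - C) + b • (Q - C) = (a • P + b • Q) - (a • C + b • C) := by
        rw [smul_sub, smul_sub]; abel
    _ = C - C := by rw [h1, ← hC]
    _ = 0 := sub_self C

lemma scalar_pen {F F₁ F₂ s s₁ s₂ a b : ℝ} (hF : 0 ≤ F) (hF1 : 0 ≤ F₁) (hF2 : 0 ≤ F₂)
    (hs1 : 0 < s₁) (hs2 : 0 < s₂) (ha : 0 ≤ a) (hb : 0 ≤ b) (hab : a + b = 1)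
    (hFle : F ≤ a * F₁ + b * F₂) (hsge : a * s₁ + b * s₂ ≤ s) :
    F ^ 2 / (2 * s) ≤ a * (F₁ ^ 2 / (2 * s₁)) + b * (F₂ ^ 2 / (2 * s₂)) := by
  have hcomb : 0 < a * s₁ + b * s₂ := by
    rcases ha.lt_or_eq with ha' | ha'
    · nlinarith [mul_nonneg hb hs2.le]
    · have hb1 : b = 1 := by linarith
      rw [← ha', hb1]; nlinarith
  have hs : 0 < s := lt_of_lt_of_le hcomb hsge
  have step1 : F ^ 2 / (2 * s) ≤ (a * F₁ + b * F₂) ^ 2 / (2 * (a * s₁ + b * s₂)) := by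
    apply div_le_div₀ (by positivity) _ (by linarith) (by linarith)
    nlinarith
  refine step1.trans ?_
  rw [div_le_iff₀ (by linarith)]
  have key : (a * F₁ + b * F₂) ^ 2 * (s₁ * s₂) ≤
      (a * (F₁ ^ 2 / (2 * s₁)) + b * (F₂ ^ 2 / (2 * s₂))) * (2 * (a * s₁ + b * s₂)) * (s₁ * s₂) := by
    have expand : (a * (F₁ ^ 2 / (2 * s₁)) + b * (F₂ ^ 2 / (2 * s₂))) * (2 * (a * s₁ + b * s₂)) * (s₁ * s₂)
        = (a * F₁ ^ 2 * s₂ + b * F₂ ^ 2 * s₁) * (a * s₁ + b * s₂) := by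
      field_simp
    rw [expand]
    nlinarith [mul_nonneg (mul_nonneg ha hb) (sq_nonneg (F₁ * s₂ - F₂ * s₁))]
  have hs1s2 : 0 < s₁ * s₂ := by positivity
  nlinarith

end Statement5Aux

/-- convexity of `H ↦ Υ(H;Θ)` on `H^o = {H ∈ S^d : −Θ*⁻¹ ≺ H ≺ Θ*⁻¹}`. -/
theorem statement5 {d : ℕ} (Θstar : Matrix (Fin d) (Fin d) ℝ) (hstarSym : Θstar.IsSymm)
    (hstar : Θstar.PosDef) (δ : ℝ) (hδ0 : 0 ≤ δ) (hδ2 : δ ≤ 2)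
    (Θ : Matrix (Fin d) (Fin d) ℝ) (hΘsym : Θ.IsSymm) :
    ConvexOn ℝ
      {H : Matrix (Fin d) (Fin d) ℝ |
        H.IsSymm ∧ (Θstar⁻¹ - H).PosDef ∧ (H + Θstar⁻¹).PosDef}
      (fun H => Upsilon Θstar δ H Θ) := by
  classical
  have hSH : (msqrt Θstar).IsHermitian := by
    exact Statement5Aux.msqrt_isHermitian hstar.posSemidef
  have hSS : msqrt Θstar * msqrt Θstar = Θstar := by
    exact Statement5Aux.msqrt_mul_self hstar.posSemidef
  have hSdet : IsUnit (msqrt Θstar).det := by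
    refine isUnit_iff_ne_zero.mpr fun h => ?_
    have hdd : (msqrt Θstar).det * (msqrt Θstar).det = Θstar.det := by rw [← det_mul, hSS]
    rw [h, mul_zero] at hdd
    exact hstar.det_pos.ne (by rw [← hdd])
  have hSinv : msqrt Θstar * Θstar⁻¹ * msqrt Θstar = 1 := by
    have h2 : Θstar⁻¹ = (msqrt Θstar)⁻¹ * (msqrt Θstar)⁻¹ := by
      conv_lhs => rw [← hSS]
      rw [Matrix.mul_inv_rev]
    rw [h2, ← Matrix.mul_assoc (msqrt Θstar) (msqrt Θstar)⁻¹,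
      Matrix.mul_nonsing_inv _ hSdet, Matrix.one_mul, Matrix.nonsing_inv_mul _ hSdet]
  have hconj1 : ∀ H : Matrix (Fin d) (Fin d) ℝ,
      1 - msqrt Θstar * H * msqrt Θstar = msqrt Θstar * (Θstar⁻¹ - H) * msqrt Θstar := by
    intro H
    rw [Matrix.mul_sub, Matrix.sub_mul, hSinv]
  have hconj2 : ∀ H : Matrix (Fin d) (Fin d) ℝ,
      1 + msqrt Θstar * H * msqrt Θstar = msqrt Θstar * (H + Θstar⁻¹) * msqrt Θstar := by
    intro H
    rw [Matrix.mul_add, Matrix.add_mul, hSinv, add_comm]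
  set Ho : Set (Matrix (Fin d) (Fin d) ℝ) :=
    {H : Matrix (Fin d) (Fin d) ℝ |
        H.IsSymm ∧ (Θstar⁻¹ - H).PosDef ∧ (H + Θstar⁻¹).PosDef} with hHo
  have hPD1 : ∀ H ∈ Ho, (1 - msqrt Θstar * H * msqrt Θstar).PosDef := by
    intro H hH
    rw [hconj1]
    exact Statement5Aux.posDef_conj hH.2.1 hSH hSdet
  have hPD2 : ∀ H ∈ Ho, (1 + msqrt Θstar * H * msqrt Θstar).PosDef := by
    intro H hH
    rw [hconj2]
    exact Statement5Aux.posDef_conj hH.2.2 hSH hSdet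
  have hHer : ∀ H ∈ Ho, (msqrt Θstar * H * msqrt Θstar).IsHermitian := by
    intro H hH
    have hHher : H.IsHermitian := by
      rw [Matrix.IsHermitian, conjTranspose_eq_transpose_of_trivial]; exact hH.1
    rw [Matrix.IsHermitian, conjTranspose_mul, conjTranspose_mul, hSH, hHher, Matrix.mul_assoc]
  have hspecLT : ∀ H ∈ Ho, specNorm (msqrt Θstar * H * msqrt Θstar) < 1 := fun H hH =>
    Statement5Aux.specNorm_lt_one (hHer H hH) (hPD1 H hH) (hPD2 H hH)
  -- convexity of the set
  have hset : Convex ℝ Ho := by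
    intro x hx y hy a b ha hb hab
    have h1 : a • (1:Matrix (Fin d) (Fin d) ℝ) + b • 1 = 1 := by
      rw [← add_smul, hab, one_smul]
    refine ⟨?_, ?_, ?_⟩
    · show (a • x + b • y).IsSymm
      rw [Matrix.IsSymm, transpose_add, transpose_smul, transpose_smul, hx.1, hy.1]
    · rw [Statement5Aux.sub_combo _ _ _ hab]
      exact Statement5Aux.convex_combo_posDef hx.2.1 hy.2.1 ha hb hab
    · rw [Statement5Aux.add_combo _ _ _ hab]
      exact Statement5Aux.convex_combo_posDef hx.2.2 hy.2.2 ha hb hab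
  refine ⟨hset, ?_⟩
  intro x hx y hy a b ha hb hab
  have hmem : a • x + b • y ∈ Ho := hset hx hy ha hb hab
  simp only [Upsilon, smul_eq_mul]
  have hlin : msqrt Θstar * (a • x + b • y) * msqrt Θstar
      = a • (msqrt Θstar * x * msqrt Θstar) + b • (msqrt Θstar * y * msqrt Θstar) := by
    rw [Matrix.mul_add, Matrix.mul_smul, Matrix.mul_smul, Matrix.add_mul,
      Matrix.smul_mul, Matrix.smul_mul]
  -- the log-det part
  have hT1 : a * Real.log (1 - msqrt Θstar * x * msqrt Θstar).det
      + b * Real.log (1 - msqrt Θstar * y * msqrt Θstar).det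
      ≤ Real.log (1 - msqrt Θstar * (a • x + b • y) * msqrt Θstar).det := by
    set P := 1 - msqrt Θstar * x * msqrt Θstar with hPdef
    set Q := 1 - msqrt Θstar * y * msqrt Θstar with hQdef
    set C := 1 - msqrt Θstar * (a • x + b • y) * msqrt Θstar with hCdef
    have hCeq : C = a • P + b • Q := by
      rw [hCdef, hPdef, hQdef, hlin]
      exact Statement5Aux.sub_combo _ _ _ hab
    have hP : P.PosDef := hPD1 x hx
    have hQ : Q.PosDef := hPD1 y hy
    have hC : C.PosDef := hPD1 _ hmem
    have t1 := Statement5Aux.logdet_tangent hP hC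
    have t2 := Statement5Aux.logdet_tangent hQ hC
    have hzero : a • (P - C) + b • (Q - C) = 0 := Statement5Aux.combo_zero hab hCeq
    have htr0 : a * (C⁻¹ * (P - C)).trace + b * (C⁻¹ * (Q - C)).trace = 0 := by
      have hmc : a • (C⁻¹ * (P - C)) + b • (C⁻¹ * (Q - C))
          = C⁻¹ * (a • (P - C) + b • (Q - C)) := by
        rw [Matrix.mul_add, mul_smul_comm, mul_smul_comm]
      have h2 : a • (C⁻¹ * (P - C)) + b • (C⁻¹ * (Q - C)) = 0 := by
        rw [hmc, hzero, Matrix.mul_zero]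
      have h3 := congrArg Matrix.trace h2
      rw [trace_add, trace_smul, trace_smul, trace_zero] at h3
      simpa [smul_eq_mul] using h3
    have hsum : a * Real.log C.det + b * Real.log C.det = Real.log C.det := by
      rw [← add_mul, hab, one_mul]
    nlinarith [mul_le_mul_of_nonneg_left t1 ha, mul_le_mul_of_nonneg_left t2 hb]
  -- the trace part
  have hT2 : ((Θ - Θstar) * (a • x + b • y)).trace
      = a * ((Θ - Θstar) * x).trace + b * ((Θ - Θstar) * y).trace := by
    rw [Matrix.mul_add, mul_smul_comm, mul_smul_comm, trace_add, trace_smul, trace_smul]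
    simp [smul_eq_mul]
  -- the penalty part
  have hs1 : 0 < 1 - specNorm (msqrt Θstar * x * msqrt Θstar) := by
    linarith [hspecLT x hx]
  have hs2 : 0 < 1 - specNorm (msqrt Θstar * y * msqrt Θstar) := by
    linarith [hspecLT y hy]
  have hsK : specNorm (msqrt Θstar * (a • x + b • y) * msqrt Θstar)
      ≤ a * specNorm (msqrt Θstar * x * msqrt Θstar)
        + b * specNorm (msqrt Θstar * y * msqrt Θstar) := by
    rw [hlin]
    exact Statement5Aux.spec_conv _ _ ha hb
  have hFK : frobNorm (msqrt Θstar * (a • x + b • y) * msqrt Θstar)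
      ≤ a * frobNorm (msqrt Θstar * x * msqrt Θstar)
        + b * frobNorm (msqrt Θstar * y * msqrt Θstar) := by
    rw [hlin]
    exact Statement5Aux.frob_conv _ _ ha hb
  have hsge : a * (1 - specNorm (msqrt Θstar * x * msqrt Θstar))
      + b * (1 - specNorm (msqrt Θstar * y * msqrt Θstar))
      ≤ 1 - specNorm (msqrt Θstar * (a • x + b • y) * msqrt Θstar) := by
    nlinarith [hsK]
  have core := Statement5Aux.scalar_pen
    (Statement5Aux.frobNorm_nonneg (msqrt Θstar * (a • x + b • y) * msqrt Θstar))
    (Statement5Aux.frobNorm_nonneg (msqrt Θstar * x * msqrt Θstar))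
    (Statement5Aux.frobNorm_nonneg (msqrt Θstar * y * msqrt Θstar))
    hs1 hs2 ha hb hab hFK hsge
  have hc : 0 ≤ δ * (2 + δ) := mul_nonneg hδ0 (by linarith)
  have hT3 : δ * (2 + δ) * (frobNorm (msqrt Θstar * (a • x + b • y) * msqrt Θstar)) ^ 2
        / (2 * (1 - specNorm (msqrt Θstar * (a • x + b • y) * msqrt Θstar)))
      ≤ a * (δ * (2 + δ) * (frobNorm (msqrt Θstar * x * msqrt Θstar)) ^ 2
          / (2 * (1 - specNorm (msqrt Θstar * x * msqrt Θstar))))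
        + b * (δ * (2 + δ) * (frobNorm (msqrt Θstar * y * msqrt Θstar)) ^ 2
          / (2 * (1 - specNorm (msqrt Θstar * y * msqrt Θstar)))) := by
    have hmul := mul_le_mul_of_nonneg_left core hc
    calc δ * (2 + δ) * (frobNorm (msqrt Θstar * (a • x + b • y) * msqrt Θstar)) ^ 2
          / (2 * (1 - specNorm (msqrt Θstar * (a • x + b • y) * msqrt Θstar)))
        = δ * (2 + δ) * ((frobNorm (msqrt Θstar * (a • x + b • y) * msqrt Θstar)) ^ 2
          / (2 * (1 - specNorm (msqrt Θstar * (a • x + b • y) * msqrt Θstar)))) := by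
          rw [mul_div_assoc]
      _ ≤ δ * (2 + δ) * (a * ((frobNorm (msqrt Θstar * x * msqrt Θstar)) ^ 2
            / (2 * (1 - specNorm (msqrt Θstar * x * msqrt Θstar))))
          + b * ((frobNorm (msqrt Θstar * y * msqrt Θstar)) ^ 2
            / (2 * (1 - specNorm (msqrt Θstar * y * msqrt Θstar))))) := hmul
      _ = a * (δ * (2 + δ) * (frobNorm (msqrt Θstar * x * msqrt Θstar)) ^ 2
            / (2 * (1 - specNorm (msqrt Θstar * x * msqrt Θstar))))
          + b * (δ * (2 + δ) * (frobNorm (msqrt Θstar * y * msqrt Θstar)) ^ 2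
            / (2 * (1 - specNorm (msqrt Θstar * y * msqrt Θstar)))) := by
          ring
  linarith [hT1, hT2, hT3]

end
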